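/- For monomial ideals J ⊂ I ⊂ S, the Stanley depth does not decrease upon localization at f: sdepth(I/J) ≤ sdepth((I/J)_f). -/

import Mathlib

/-!
Combinatorial model of the localized polynomial ring `S_f`, where
`S = K[x_1, …, x_n]`, `A ⊆ {1, …, n}` and `f = ∏_{j ∈ A} x_j`.

Since all the `ℤⁿ`-graded components of `S_f` are at most one-dimensional over `K`,
monomial `K`-subspaces of `S_f` (in particular monomial ideals, Stanley spaces and
modules `I/J`) are faithfully encoded by their sets of exponent vectors `a : Fin n → ℤ`,
direct sum decompositions into monomial subspaces correspond exactly to partitions of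
the exponent sets, and (for those sets `Z` considered here) `u·K[Z]` is automatically a
free `K[Z]`-module.
-/

/-- Exponent vectors of the monomials of `S_f`: all `a : ℤⁿ` with `a j ≥ 0` for `j ∉ A`. -/
def SfMon {n : ℕ} (A : Finset (Fin n)) : Set (Fin n → ℤ) :=
  {a | ∀ j, j ∉ A → 0 ≤ a j}

/-- `M` is the set of exponent vectors of the monomials of a monomial ideal of `S_f`
(for `A = ∅` this is a monomial ideal of the polynomial ring `S` itself). -/
def IsMonomialIdeal {n : ℕ} (A : Finset (Fin n)) (M : Set (Fin n → ℤ)) : Prop :=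
  M ⊆ SfMon A ∧ ∀ a ∈ M, ∀ c ∈ SfMon A, a + c ∈ M

/-- Admissible sets of "variables" for Stanley spaces in `S_f`: `(i, true)` stands for
`x i` and `(i, false)` for `x i⁻¹`; inverse variables exist only for `i ∈ A`, and
`{x i, x i⁻¹} ⊄ Z`. -/
def ZOk {n : ℕ} (A : Finset (Fin n)) (Z : Finset (Fin n × Bool)) : Prop :=
  (∀ i : Fin n, (i, false) ∈ Z → i ∈ A) ∧
  ∀ i : Fin n, ¬((i, true) ∈ Z ∧ (i, false) ∈ Z)

/-- Exponent vectors of the monomials of the Stanley space `u·K[Z]`. -/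
def stanleySet {n : ℕ} (u : Fin n → ℤ) (Z : Finset (Fin n × Bool)) : Set (Fin n → ℤ) :=
  {a | ∀ i : Fin n, ((i, true) ∈ Z → u i ≤ a i) ∧ ((i, false) ∈ Z → a i ≤ u i) ∧
      ((i, true) ∉ Z → (i, false) ∉ Z → a i = u i)}

/-- The family of Stanley spaces `u i · K[Z i]` is a Stanley decomposition of the
monomial `K`-vector space whose monomials have exponent vectors in `M`. -/
def IsStanleyDecompOn {n : ℕ} (A : Finset (Fin n)) (M : Set (Fin n → ℤ)) {ι : Type}
    (u : ι → Fin n → ℤ) (Z : ι → Finset (Fin n × Bool)) : Prop :=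
  Finite ι ∧ (∀ i, ZOk A (Z i)) ∧
  Pairwise (fun i j : ι => Disjoint (stanleySet (u i) (Z i)) (stanleySet (u j) (Z j))) ∧
  (⋃ i, stanleySet (u i) (Z i)) = M

/-- Stanley depth of the monomial `K`-space with exponent set `M` (value `⊤` for `M = ∅`). -/
noncomputable def sdepth {n : ℕ} (A : Finset (Fin n)) (M : Set (Fin n → ℤ)) : ℕ∞ :=
  sSup {k : ℕ∞ | ∃ (r : ℕ) (u : Fin r → Fin n → ℤ) (Z : Fin r → Finset (Fin n × Bool)),
    IsStanleyDecompOn A M u Z ∧ ∀ i, k ≤ ((Z i).card : ℕ∞)}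

/-- The exponent vector of `f = ∏_{j ∈ A} x_j`. -/
def fVec {n : ℕ} (A : Finset (Fin n)) : Fin n → ℤ := fun i => if i ∈ A then 1 else 0

/-- Localization at `f` of a monomial ideal (given by its set of exponent vectors). -/
def locSet {n : ℕ} (A : Finset (Fin n)) (M : Set (Fin n → ℤ)) : Set (Fin n → ℤ) :=
  {b ∈ SfMon A | ∃ k : ℕ, b + (k : ℤ) • fVec A ∈ M}

/-- `|a| = Σ_i |a_i|`, the degree used for the Hilbert series. -/
def degAbs {n : ℕ} (a : Fin n → ℤ) : ℕ := ∑ i, (a i).natAbs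

/-- The Hilbert series `H_M(t) = Σ_d H(M,d) t^d`, `H(M,d) = #{a ∈ M : |a| = d}`, of the
`ℤⁿ`-graded `K`-vector space with monomial exponent set `M`. -/
noncomputable def hilbSeries {n : ℕ} (M : Set (Fin n → ℤ)) : PowerSeries ℚ :=
  PowerSeries.mk fun d => (({a ∈ M | degAbs a = d}).ncard : ℚ)

/-- A prime filtration `J = N 0 ⊂ N 1 ⊂ … ⊂ N r = I` of `I/J` by monomial ideals of `S_f`,
with `i`-th factor isomorphic, as a `ℤⁿ`-graded module, to `(S_f/P_{B i})(-a i)`, where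
`P_B` is the monomial prime ideal generated by the variables `x j`, `j ∈ B`. -/
def IsPrimeFiltration {n : ℕ} (A : Finset (Fin n)) (J I : Set (Fin n → ℤ)) (r : ℕ)
    (N : Fin (r + 1) → Set (Fin n → ℤ)) (B : Fin r → Finset (Fin n))
    (a : Fin r → Fin n → ℤ) : Prop :=
  N 0 = J ∧ N (Fin.last r) = I ∧
  (∀ i : Fin (r + 1), IsMonomialIdeal A (N i)) ∧
  (∀ i : Fin r, N i.castSucc ⊂ N i.succ) ∧
  (∀ i : Fin r, ∀ j ∈ A, j ∉ B i) ∧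
  (∀ i : Fin r, ∀ j, 0 ≤ a i j) ∧
  (∀ i : Fin r, ∀ j ∈ A, a i j = 0) ∧
  (∀ i : Fin r, N i.succ \ N i.castSucc =
    {b | ∃ c ∈ SfMon A, (∀ j ∈ B i, c j = 0) ∧ b = a i + c})

/-- `fdepth` of `I/J` (value `⊤` for `I = J`); `dim S_f/P_B = n - |B|`. -/
noncomputable def fdepth {n : ℕ} (A : Finset (Fin n)) (J I : Set (Fin n → ℤ)) : ℕ∞ :=
  sSup {k : ℕ∞ | ∃ (r : ℕ) (N : Fin (r + 1) → Set (Fin n → ℤ)) (B : Fin r → Finset (Fin n))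
      (a : Fin r → Fin n → ℤ), IsPrimeFiltration A J I r N B a ∧
      ∀ i, k ≤ ((n - (B i).card : ℕ) : ℕ∞)}

/-- The set of exponent vectors of the monomials of the colon ideal `(J :_{S_f} I)`,
which is the annihilator of `I/J`. -/
def colonSet {n : ℕ} (A : Finset (Fin n)) (I J : Set (Fin n → ℤ)) : Set (Fin n → ℤ) :=
  {c ∈ SfMon A | ∀ a ∈ I, a + c ∈ J}

/-- The monomial prime `P_B·S_f` contains the monomial ideal with exponent set `Q`. -/
def primeContainsIdeal {n : ℕ} (B : Finset (Fin n)) (Q : Set (Fin n → ℤ)) : Prop :=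
  ∀ c ∈ Q, ∃ j ∈ B, 1 ≤ c j

/-- `P_B·S_f` is a minimal prime ideal of the module `I/J`, i.e. a prime of `S_f`
(so `B ∩ A = ∅`) minimal among those containing `ann(I/J) = (J : I)`. -/
def IsMinimalPrimeOf {n : ℕ} (A B : Finset (Fin n)) (I J : Set (Fin n → ℤ)) : Prop :=
  (∀ j ∈ A, j ∉ B) ∧ primeContainsIdeal B (colonSet A I J) ∧
  ∀ B' ⊆ B, primeContainsIdeal B' (colonSet A I J) → B' = B

namespace SdepthLoc

variable {n : ℕ}

lemma mem_stanleySet {u a : Fin n → ℤ} {Z : Finset (Fin n × Bool)} :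
    a ∈ stanleySet u Z ↔ ∀ i : Fin n, ((i, true) ∈ Z → u i ≤ a i) ∧
      ((i, false) ∈ Z → a i ≤ u i) ∧
      ((i, true) ∉ Z → (i, false) ∉ Z → a i = u i) := Iff.rfl

lemma self_mem_stanleySet (u : Fin n → ℤ) (Z : Finset (Fin n × Bool)) : u ∈ stanleySet u Z :=
  fun _ => ⟨fun _ => le_refl _, fun _ => le_refl _, fun _ _ => rfl⟩

lemma smul_fVec_mem (A : Finset (Fin n)) (k : ℕ) :
    ((k : ℤ) • fVec A) ∈ SfMon (∅ : Finset (Fin n)) := by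
  intro j _
  simp only [Pi.smul_apply, smul_eq_mul, fVec]
  split <;> positivity

lemma ideal_up {M : Set (Fin n → ℤ)} (hM : IsMonomialIdeal ∅ M) (A : Finset (Fin n))
    {b : Fin n → ℤ} {k k' : ℕ} (hk : b + (k : ℤ) • fVec A ∈ M) (h : k ≤ k') :
    b + (k' : ℤ) • fVec A ∈ M := by
  have h2 := hM.2 _ hk _ (smul_fVec_mem A (k' - k))
  have he : b + (k : ℤ) • fVec A + ((k' - k : ℕ) : ℤ) • fVec A = b + (k' : ℤ) • fVec A := by
    funext j
    simp only [Pi.add_apply, Pi.smul_apply, smul_eq_mul]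
    have : ((k' - k : ℕ) : ℤ) = (k' : ℤ) - (k : ℤ) := by
      push_cast [Nat.cast_sub h]; ring
    rw [this]; ring
  rwa [he] at h2

def locU (u : Fin n → ℤ) (ε : Fin n → Bool) : Fin n → ℤ :=
  fun j => if ε j then u j else u j - 1

def locZ (A : Finset (Fin n)) (Zi : Finset (Fin n × Bool)) (ε : Fin n → Bool) :
    Finset (Fin n × Bool) :=
  A.image (fun j => (j, ε j)) ∪ Zi.filter (fun q => q.1 ∉ A)

lemma mem_locZ {A : Finset (Fin n)} {Zi : Finset (Fin n × Bool)} {ε : Fin n → Bool}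
    {q : Fin n × Bool} :
    q ∈ locZ A Zi ε ↔ (q.1 ∈ A ∧ q.2 = ε q.1) ∨ (q ∈ Zi ∧ q.1 ∉ A) := by
  simp only [locZ, Finset.mem_union, Finset.mem_image, Finset.mem_filter]
  constructor
  · rintro (⟨j, hj, rfl⟩ | h)
    · exact Or.inl ⟨hj, rfl⟩
    · exact Or.inr h
  · rintro (⟨h1, h2⟩ | h)
    · exact Or.inl ⟨q.1, h1, by rw [← h2]⟩
    · exact Or.inr h

lemma locU_true {u : Fin n → ℤ} {ε : Fin n → Bool} {j : Fin n} (h : ε j = true) :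
    locU u ε j = u j := by simp [locU, h]

lemma locU_false {u : Fin n → ℤ} {ε : Fin n → Bool} {j : Fin n} (h : ε j = false) :
    locU u ε j = u j - 1 := by simp [locU, h]

lemma up_mem {A : Finset (Fin n)} {u : Fin n → ℤ} {Zi : Finset (Fin n × Bool)}
    {ε : Fin n → Bool}
    (hall : ∀ q ∈ Zi, q.2 = true) (hA : ∀ j ∈ A, (j, true) ∈ Zi)
    (hε : ∀ j ∉ A, ε j = true)
    {b : Fin n → ℤ} (hb : b ∈ stanleySet (locU u ε) (locZ A Zi ε))
    {k : ℕ} (hk : ∀ j ∈ A, u j ≤ b j + k) :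
    b + (k : ℤ) • fVec A ∈ stanleySet u Zi := by
  intro i
  have hbi := hb i
  by_cases hiA : i ∈ A
  · refine ⟨fun _ => ?_, fun hf => ?_, fun ht _ => absurd (hA i hiA) ht⟩
    · simpa [fVec, hiA] using hk i hiA
    · exact absurd (hall _ hf) (by simp)
  · have hfv : ((k : ℤ) • fVec A) i = 0 := by simp [fVec, hiA]
    have hεi := hε i hiA
    refine ⟨fun ht => ?_, fun hf => absurd (hall _ hf) (by simp), fun ht hf => ?_⟩
    · have h1 : (i, true) ∈ locZ A Zi ε := mem_locZ.2 (Or.inr ⟨ht, hiA⟩)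
      have := hbi.1 h1
      simp only [locU, hεi, if_pos] at this
      simp only [Pi.add_apply, hfv, add_zero]
      exact this
    · have h1 : (i, true) ∉ locZ A Zi ε := by
        intro h; rcases mem_locZ.1 h with ⟨h, _⟩ | ⟨h, _⟩
        exacts [hiA h, ht h]
      have h2 : (i, false) ∉ locZ A Zi ε := by
        intro h; rcases mem_locZ.1 h with ⟨h, _⟩ | ⟨h, _⟩
        exacts [hiA h, hf h]
      have := hbi.2.2 h1 h2
      simp only [locU, hεi, if_pos] at this
      simp only [Pi.add_apply, hfv, add_zero]
      exact this

lemma down_mem {A : Finset (Fin n)} {u : Fin n → ℤ} {Zi : Finset (Fin n × Bool)}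
    (hall : ∀ q ∈ Zi, q.2 = true)
    {b : Fin n → ℤ} {k : ℕ} (hb : b + (k : ℤ) • fVec A ∈ stanleySet u Zi) :
    ∃ ε : Fin n → Bool, (∀ j ∉ A, ε j = true) ∧
      b ∈ stanleySet (locU u ε) (locZ A Zi ε) := by
  classical
  refine ⟨fun j => if j ∈ A then decide (u j ≤ b j) else true,
    fun j hj => by simp [hj], fun i => ?_⟩
  have hbi := hb i
  set ε : Fin n → Bool := fun j => if j ∈ A then decide (u j ≤ b j) else true with hεdef
  refine ⟨fun ht => ?_, fun hf => ?_, fun ht hf => ?_⟩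
  · rcases mem_locZ.1 ht with ⟨h1, h2⟩ | ⟨h1, h2⟩
    · have hεi : ε i = true := h2.symm
      simp only [hεdef, if_pos h1, decide_eq_true_eq] at hεi
      simp only [locU, ← h2, if_pos]
      exact hεi
    · have hεi : ε i = true := by simp [hεdef, h2]
      have := hbi.1 h1
      simp only [Pi.add_apply, Pi.smul_apply, smul_eq_mul, fVec, if_neg h2,
        mul_zero, add_zero] at this
      simp only [locU, hεi, if_pos]
      exact this
  · rcases mem_locZ.1 hf with ⟨h1, h2⟩ | ⟨h1, _⟩
    · have hεi : ε i = false := h2.symm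
      simp only [hεdef, if_pos h1, decide_eq_false_iff_not, not_le] at hεi
      · simp only [locU, ← h2]
        omega
    · exact absurd (hall _ h1) (by simp)
  · have hiA : i ∉ A := by
      intro h
      have : (i, ε i) ∈ locZ A Zi ε := mem_locZ.2 (Or.inl ⟨h, rfl⟩)
      cases hεb : ε i
      · rw [hεb] at this; exact hf this
      · rw [hεb] at this; exact ht this
    have hεi : ε i = true := by simp [hεdef, hiA]
    have ht' : (i, true) ∉ Zi := fun h => ht (mem_locZ.2 (Or.inr ⟨h, hiA⟩))
    have hf' : (i, false) ∉ Zi := fun h => absurd (hall _ h) (by simp)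
    have := hbi.2.2 ht' hf'
    simp only [Pi.add_apply, Pi.smul_apply, smul_eq_mul, fVec, if_neg hiA,
      mul_zero, add_zero] at this
    simp only [locU, hεi, if_pos]
    exact this

lemma piece_sfmon {A : Finset (Fin n)} {u : Fin n → ℤ} {Zi : Finset (Fin n × Bool)}
    {ε : Fin n → Bool} {b : Fin n → ℤ}
    (hall : ∀ q ∈ Zi, q.2 = true) (hε : ∀ j ∉ A, ε j = true) (hu : ∀ j, 0 ≤ u j)
    (hb : b ∈ stanleySet (locU u ε) (locZ A Zi ε)) : b ∈ SfMon A := by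
  classical
  intro j hj
  have hbj := hb j
  have hεj := hε j hj
  have hloc : locU u ε j = u j := by simp [locU, hεj]
  by_cases h : (j, true) ∈ locZ A Zi ε
  · have := hbj.1 h
    rw [hloc] at this
    exact le_trans (hu j) this
  · have h2 : (j, false) ∉ locZ A Zi ε := by
      intro hmem
      rcases mem_locZ.1 hmem with ⟨h1, _⟩ | ⟨h1, _⟩
      exacts [hj h1, absurd (hall _ h1) (by simp)]
    have := hbj.2.2 h h2
    rw [hloc] at this
    rw [this]; exact hu j

lemma card_le_locZ {A : Finset (Fin n)} {Zi : Finset (Fin n × Bool)} {ε : Fin n → Bool}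
    (hall : ∀ q ∈ Zi, q.2 = true) : Zi.card ≤ (locZ A Zi ε).card := by
  classical
  have hdisj : Disjoint (A.image fun j => (j, ε j)) (Zi.filter fun q => q.1 ∉ A) := by
    rw [Finset.disjoint_left]
    rintro q hq hq'
    rcases Finset.mem_image.1 hq with ⟨j, hj, rfl⟩
    exact (Finset.mem_filter.1 hq').2 hj
  have hinj : Function.Injective (fun j : Fin n => (j, ε j)) := by
    intro a b h; exact congrArg Prod.fst h
  rw [locZ, Finset.card_union_of_disjoint hdisj, Finset.card_image_of_injective _ hinj]
  have hsplit := Finset.card_filter_add_card_filter_not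
    (s := Zi) (fun q : Fin n × Bool => q.1 ∈ A)
  have h1 : (Zi.filter fun q => q.1 ∈ A).card ≤ A.card := by
    apply Finset.card_le_card_of_injOn (fun q => q.1)
    · intro q hq; exact (Finset.mem_filter.1 hq).2
    · intro q hq q' hq' h
      have hq2 := hall _ (Finset.mem_filter.1 hq).1
      have hq'2 := hall _ (Finset.mem_filter.1 hq').1
      exact Prod.ext h (hq2.trans hq'2.symm)
  have : (Zi.filter fun q => ¬ q.1 ∈ A) = (Zi.filter fun q => q.1 ∉ A) := rfl
  omega

end SdepthLoc

open SdepthLoc in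
/-- Stanley depth does not decrease upon localization: for monomial ideals
`J ⊂ I ⊂ S` (ambient parameter `A = ∅`), `sdepth I/J ≤ sdepth (I/J)_f`. -/
theorem sdepth_le_sdepth_localization {n : ℕ} (A : Finset (Fin n))
    (I J : Set (Fin n → ℤ))
    (hI : IsMonomialIdeal (∅ : Finset (Fin n)) I) (hJ : IsMonomialIdeal ∅ J)
    (hJI : J ⊂ I) :
    sdepth (∅ : Finset (Fin n)) (I \ J) ≤ sdepth A (locSet A I \ locSet A J) := by
  classical
  apply sSup_le_sSup
  rintro k ⟨r, u, Z, ⟨-, hZok, hdisj, hunion⟩, hcard⟩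
  have hall : ∀ i, ∀ q ∈ Z i, q.2 = true := by
    rintro i ⟨j, b⟩ hq
    cases b
    · exact absurd ((hZok i).1 j hq) (by simp)
    · rfl
  have humem : ∀ i, u i ∈ I \ J := by
    intro i; rw [← hunion]; exact Set.mem_iUnion.2 ⟨i, self_mem_stanleySet _ _⟩
  have hu0 : ∀ i j, 0 ≤ u i j := fun i j => hI.1 (humem i).1 j (by simp)
  -- index type of the new decomposition
  let ι := {p : Fin r × (Fin n → Bool) //
    (∀ j ∈ A, (j, true) ∈ Z p.1) ∧ ∀ j ∉ A, p.2 j = true}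
  have hfι : Fintype ι := Fintype.ofFinite ι
  let e : Fin (Fintype.card ι) ≃ ι := (Fintype.equivFin ι).symm
  have hKbound : ∀ (i : Fin r) (b : Fin n → ℤ) (k : ℕ),
      A.sup (fun j => (u i j - b j).toNat) ≤ k → ∀ j ∈ A, u i j ≤ b j + k := by
    intro i b k hk j hj
    have h1 : (u i j - b j).toNat ≤ k :=
      le_trans (Finset.le_sup (f := fun j => (u i j - b j).toNat) hj) hk
    have h2 : u i j - b j ≤ ((u i j - b j).toNat : ℤ) := Int.self_le_toNat _
    omega
  refine ⟨Fintype.card ι, fun t => locU (u ((e t : ι) : Fin r × (Fin n → Bool)).1)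
      ((e t : ι) : Fin r × (Fin n → Bool)).2,
    fun t => locZ A (Z ((e t : ι) : Fin r × (Fin n → Bool)).1)
      ((e t : ι) : Fin r × (Fin n → Bool)).2, ⟨Finite.of_fintype _, ?_, ?_, ?_⟩, ?_⟩
  · -- ZOk
    intro t
    obtain ⟨⟨⟨i, ε⟩, hAi, hε⟩, hpt⟩ : ∃ p : ι, e t = p := ⟨e t, rfl⟩
    simp only [hpt]
    constructor
    · intro j hj
      rcases mem_locZ.1 hj with ⟨hjA, _⟩ | ⟨hjZ, _⟩
      · exact hjA
      · exact absurd (hall i _ hjZ) (by simp)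
    · rintro j ⟨h1, h2⟩
      rcases mem_locZ.1 h2 with ⟨hjA, hev⟩ | ⟨hjZ, _⟩
      · rcases mem_locZ.1 h1 with ⟨_, hev'⟩ | ⟨_, hjA'⟩
        · rw [← hev'] at hev; exact absurd hev (by simp)
        · exact hjA' hjA
      · exact absurd (hall i _ hjZ) (by simp)
  · -- pairwise disjoint
    intro t t' htt'
    have hne : (e t : ι).val ≠ (e t' : ι).val := fun h => htt' (e.injective (Subtype.ext h))
    obtain ⟨⟨⟨i, ε⟩, hAi, hε⟩, hpt⟩ : ∃ p : ι, e t = p := ⟨e t, rfl⟩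
    obtain ⟨⟨⟨i', ε'⟩, hAi', hε'⟩, hpt'⟩ : ∃ p : ι, e t' = p := ⟨e t', rfl⟩
    simp only [hpt, hpt'] at hne ⊢
    rw [Set.disjoint_left]
    intro b hb hb'
    by_cases hii : i = i'
    · subst hii
      have hεε : ε ≠ ε' := fun h => hne (by rw [h])
      obtain ⟨j, hj⟩ := Function.ne_iff.1 hεε
      have hjA : j ∈ A := by
        by_contra hjA
        exact hj ((hε j hjA).trans (hε' j hjA).symm)
      have m1 : (j, ε j) ∈ locZ A (Z i) ε := mem_locZ.2 (Or.inl ⟨hjA, rfl⟩)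
      have m2 : (j, ε' j) ∈ locZ A (Z i) ε' := mem_locZ.2 (Or.inl ⟨hjA, rfl⟩)
      have c1 := hb j
      have c2 := hb' j
      cases hc : ε j <;> cases hc' : ε' j
      · exact hj (hc.trans hc'.symm)
      · rw [hc] at m1; rw [hc'] at m2
        have l1 := c1.2.1 m1
        have l2 := c2.1 m2
        rw [locU_false hc] at l1
        rw [locU_true hc'] at l2
        omega
      · rw [hc] at m1; rw [hc'] at m2
        have l1 := c1.1 m1
        have l2 := c2.2.1 m2
        rw [locU_true hc] at l1
        rw [locU_false hc'] at l2
        omega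
      · exact hj (hc.trans hc'.symm)
    · set K := max (A.sup fun j => (u i j - b j).toNat)
        (A.sup fun j => (u i' j - b j).toNat) with hK
      have h1 : b + (K : ℤ) • fVec A ∈ stanleySet (u i) (Z i) :=
        up_mem (hall i) hAi hε hb (hKbound i b K (le_max_left _ _))
      have h2 : b + (K : ℤ) • fVec A ∈ stanleySet (u i') (Z i') :=
        up_mem (hall i') hAi' hε' hb' (hKbound i' b K (le_max_right _ _))
      exact Set.disjoint_left.1 (hdisj hii) h1 h2
  · -- union equality
    ext b
    simp only [Set.mem_iUnion]
    constructor
    · rintro ⟨t, hb⟩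
      obtain ⟨⟨⟨i, ε⟩, hAi, hε⟩, hpt⟩ : ∃ p : ι, e t = p := ⟨e t, rfl⟩
      simp only [hpt] at hb
      have hSf : b ∈ SfMon A := piece_sfmon (hall i) hε (hu0 i) hb
      set K := A.sup (fun j => (u i j - b j).toNat) with hKdef
      have hup : ∀ k : ℕ, K ≤ k → b + (k : ℤ) • fVec A ∈ stanleySet (u i) (Z i) :=
        fun k hk => up_mem (hall i) hAi hε hb (hKbound i b k hk)
      have hmemIJ : ∀ k : ℕ, K ≤ k → b + (k : ℤ) • fVec A ∈ I \ J := by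
        intro k hk; rw [← hunion]; exact Set.mem_iUnion.2 ⟨i, hup k hk⟩
      refine ⟨⟨hSf, K, (hmemIJ K le_rfl).1⟩, ?_⟩
      rintro ⟨-, k1, hk1⟩
      have hJ2 : b + ((max k1 K : ℕ) : ℤ) • fVec A ∈ J :=
        ideal_up hJ A hk1 (le_max_left _ _)
      exact (hmemIJ _ (le_max_right _ _)).2 hJ2
    · rintro ⟨⟨hSf, k0, hk0⟩, hbJ⟩
      have hJk : ∀ k : ℕ, b + (k : ℤ) • fVec A ∉ J := fun k hk => hbJ ⟨hSf, k, hk⟩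
      have hIJ : ∀ k : ℕ, k0 ≤ k → b + (k : ℤ) • fVec A ∈ I \ J :=
        fun k hk => ⟨ideal_up hI A hk0 hk, hJk k⟩
      have hchoice : ∀ m : Fin (r + 1), ∃ i : Fin r,
          b + ((k0 + (m : ℕ) : ℕ) : ℤ) • fVec A ∈ stanleySet (u i) (Z i) := by
        intro m
        have h := hIJ (k0 + (m : ℕ)) (Nat.le_add_right _ _)
        rw [← hunion] at h
        exact Set.mem_iUnion.1 h
      choose φ hφ using hchoice
      obtain ⟨m, m', hmm, hφm⟩ := Fintype.exists_ne_map_eq_of_card_lt φ (by simp)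
      have hAZ : ∀ j ∈ A, (j, true) ∈ Z (φ m) := by
        intro j hj
        by_contra ht
        have hf : (j, false) ∉ Z (φ m) := fun h => absurd (hall _ _ h) (by simp)
        have e1 := (hφ m j).2.2 ht hf
        have e2 := (hφ m' j).2.2 (hφm ▸ ht) (hφm ▸ hf)
        rw [hφm] at e1
        simp only [Pi.add_apply, Pi.smul_apply, smul_eq_mul, fVec, if_pos hj,
          mul_one] at e1 e2
        have hmn : (m : ℕ) = (m' : ℕ) := by push_cast at e1 e2; omega
        exact hmm (Fin.ext hmn)
      obtain ⟨ε, hε, hbmem⟩ := down_mem (hall (φ m)) (hφ m)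
      refine ⟨e.symm ⟨(φ m, ε), hAZ, hε⟩, ?_⟩
      simpa [e.apply_symm_apply] using hbmem
  · -- cardinality bound
    intro t
    obtain ⟨⟨⟨i, ε⟩, hAi, hε⟩, hpt⟩ : ∃ p : ι, e t = p := ⟨e t, rfl⟩
    simp only [hpt]
    calc k ≤ ((Z i).card : ℕ∞) := hcard i
      _ ≤ ((locZ A (Z i) ε).card : ℕ∞) := by
        exact_mod_cast card_le_locZ (hall i)
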